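/- The LRU algorithm is k-competitive for the file-bundle caching problem: for every query sequence σ whose queries have cardinality l ≤ k and every caching schedule with cache size k for σ that follows the LRU rule, the number of cache misses of that schedule is at most k · OPT_k(σ) + k. -/

import Mathlib

variable {Ω : Type*}

/-- A caching schedule with cache size `k` serving queries `Q 1, …, Q T`
(the cache contents are `C 1, …, C (T+1)`): on a hit the cache is unchanged,
on a miss the query is inserted into the next cache. -/
def IsSchedule [DecidableEq Ω] (k T : ℕ) (Q C : ℕ → Finset Ω) : Prop :=
  (∀ t, 1 ≤ t → t ≤ T + 1 → (C t).card = k) ∧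
  ∀ t, 1 ≤ t → t ≤ T →
    (Q t ⊆ C t → C (t + 1) = C t) ∧ (¬ Q t ⊆ C t → Q t ⊆ C (t + 1))

/-- The number of cache misses of the cache sequence `C` on queries `Q 1, …, Q T`. -/
def cost [DecidableEq Ω] (T : ℕ) (Q C : ℕ → Finset Ω) : ℕ :=
  ((Finset.Icc 1 T).filter fun t => ¬ Q t ⊆ C t).card

/-- The optimal offline cost with cache size `k` on queries `Q 1, …, Q T`. -/
noncomputable def OPT [DecidableEq Ω] (k T : ℕ) (Q : ℕ → Finset Ω) : ℕ :=
  sInf {n : ℕ | ∃ C : ℕ → Finset Ω, IsSchedule k T Q C ∧ cost T Q C = n}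

/-- The last-use time of page `p` before time `t`: the largest `s` with `1 ≤ s < t`
and `p ∈ Q s`, or `0` if `p` was not requested before time `t`. -/
def lastUse [DecidableEq Ω] (Q : ℕ → Finset Ω) (p : Ω) (t : ℕ) : ℕ :=
  ((Finset.Ico 1 t).filter fun s => p ∈ Q s).sup id

/-- A caching schedule following the LRU rule: at every cache miss at time `t`, exactly
`|Q t \ C t|` pages are evicted, and every evicted page was used no more recently than
every retained page outside the current query. -/
def IsLRUSchedule [DecidableEq Ω] (k T : ℕ) (Q C : ℕ → Finset Ω) : Prop :=
  IsSchedule k T Q C ∧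
  ∀ t, 1 ≤ t → t ≤ T → ¬ Q t ⊆ C t →
    ∃ E ⊆ C t \ Q t, E.card = (Q t \ C t).card ∧ C (t + 1) = (C t ∪ Q t) \ E ∧
      ∀ p ∈ E, ∀ q ∈ (C t \ Q t) \ E, lastUse Q p t ≤ lastUse Q q t

lemma lastUse_ge [DecidableEq Ω] {Q : ℕ → Finset Ω} {p : Ω} {s t : ℕ}
    (h1 : 1 ≤ s) (h2 : s < t) (hp : p ∈ Q s) : s ≤ lastUse Q p t :=
  Finset.le_sup (f := id) (by simp [Finset.mem_Ico, h1, h2, hp])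

lemma lastUse_spec [DecidableEq Ω] {Q : ℕ → Finset Ω} {p : Ω} {t : ℕ}
    (h : 1 ≤ lastUse Q p t) :
    p ∈ Q (lastUse Q p t) ∧ 1 ≤ lastUse Q p t ∧ lastUse Q p t < t := by
  set F := (Finset.Ico 1 t).filter fun s => p ∈ Q s with hF
  have hne : F.Nonempty := by
    by_contra hemp
    rw [Finset.not_nonempty_iff_eq_empty] at hemp
    have : lastUse Q p t = 0 := by simp [lastUse, ← hF, hemp]
    omega
  obtain ⟨b, hb, heq⟩ := Finset.exists_mem_eq_sup F hne id
  have hb' : lastUse Q p t = b := heq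
  rw [hb']
  simp only [hF, Finset.mem_filter, Finset.mem_Ico] at hb
  exact ⟨hb.2, hb.1.1, hb.1.2⟩

/-- Persistence: if all queries in `[a, b]` lie in a fixed `k`-element set `D`,
then a page requested at time `s ∈ [a, b]` stays in the LRU cache up to time `b + 1`. -/
lemma persist [DecidableEq Ω] {k T : ℕ} {Q C : ℕ → Finset Ω}
    (hC : IsLRUSchedule k T Q C)
    {a b : ℕ} {D : Finset Ω} (ha : 1 ≤ a) (hb : b ≤ T) (hD : D.card = k)
    (hQD : ∀ t, a ≤ t → t ≤ b → Q t ⊆ D)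
    {p : Ω} {s : ℕ} (hs1 : a ≤ s) (hs2 : s ≤ b) (hp : p ∈ Q s) :
    ∀ u, s < u → u ≤ b + 1 → p ∈ C u := by
  obtain ⟨⟨hcard, hsched⟩, hLRU⟩ := hC
  intro u
  induction u with
  | zero => omega
  | succ n ih =>
    intro hu1 hu2
    rcases Nat.lt_or_ge s n with hsn | hsn
    · have hpn : p ∈ C n := ih hsn (by omega)
      have hn1 : 1 ≤ n := by omega
      have hnT : n ≤ T := by omega
      have hnb : n ≤ b := by omega
      by_cases hhit : Q n ⊆ C n
      · rw [(hsched n hn1 hnT).1 hhit]; exact hpn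
      · by_cases hpq : p ∈ Q n
        · exact (hsched n hn1 hnT).2 hhit hpq
        · obtain ⟨E, hE, _, hCn1, hlru⟩ := hLRU n hn1 hnT hhit
          by_cases hpE : p ∈ E
          · exfalso
            have hsub : C (n + 1) ⊆ D := by
              intro q hq
              rw [hCn1] at hq
              rw [Finset.mem_sdiff, Finset.mem_union] at hq
              by_cases hqQn : q ∈ Q n
              · exact hQD n (by omega) hnb hqQn
              rcases hq.1 with hqC | hqQ
              · have hq' : q ∈ (C n \ Q n) \ E := by
                  simp [Finset.mem_sdiff, hqC, hqQn, hq.2]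
                have hle : lastUse Q p n ≤ lastUse Q q n := hlru p hpE q hq'
                have hps : s ≤ lastUse Q p n := lastUse_ge (by omega) hsn hp
                have hq1 : 1 ≤ lastUse Q q n := by omega
                obtain ⟨hqmem, _, hqlt⟩ := lastUse_spec hq1
                exact hQD _ (by omega) (by omega) hqmem
              · exact absurd hqQ hqQn
            have hCeq : C (n + 1) = D :=
              Finset.eq_of_subset_of_card_le hsub
                (by rw [hD, hcard (n + 1) (by omega) (by omega)])
            have hpD : p ∈ D := hQD s hs1 hs2 hp
            rw [← hCeq] at hpD
            rw [hCn1, Finset.mem_sdiff] at hpD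
            exact hpD.2 hpE
          · rw [hCn1, Finset.mem_sdiff, Finset.mem_union]
            exact ⟨Or.inl hpn, hpE⟩
    · have hns : n = s := by omega
      subst hns
      have hn1 : 1 ≤ n := by omega
      have hnT : n ≤ T := by omega
      by_cases hhit : Q n ⊆ C n
      · rw [(hsched n hn1 hnT).1 hhit]; exact hhit hp
      · exact (hsched n hn1 hnT).2 hhit hp

/-- Segment lemma: if all queries in `[a, b]` lie in a fixed `k`-element set `D`,
then an LRU schedule has at most `k` misses in `[a, b]`. -/
lemma segment_misses [DecidableEq Ω] {k T : ℕ} {Q C : ℕ → Finset Ω}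
    (hC : IsLRUSchedule k T Q C)
    {a b : ℕ} {D : Finset Ω} (ha : 1 ≤ a) (hb : b ≤ T) (hD : D.card = k)
    (hQD : ∀ t, a ≤ t → t ≤ b → Q t ⊆ D) :
    ((Finset.Icc a b).filter fun t => ¬ Q t ⊆ C t).card ≤ k := by
  classical
  set F := (Finset.Icc a b).filter fun t => ¬ Q t ⊆ C t with hF
  rcases F.eq_empty_or_nonempty with hFe | ⟨t0, ht0⟩
  · rw [hFe]; simp
  · have hmiss : ∀ t ∈ F, (Q t \ C t).Nonempty := by
      intro t ht
      rw [hF, Finset.mem_filter] at ht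
      exact Finset.sdiff_nonempty.mpr ht.2
    have : Nonempty Ω := ⟨(hmiss t0 ht0).choose⟩
    set f : ℕ → Ω := fun t =>
      if h : (Q t \ C t).Nonempty then h.choose else Classical.arbitrary Ω with hf
    have hfmem : ∀ t ∈ F, f t ∈ Q t \ C t := by
      intro t ht
      rw [hf]
      dsimp only
      rw [dif_pos (hmiss t ht)]
      exact (hmiss t ht).choose_spec
    rw [← hD]
    apply Finset.card_le_card_of_injOn f
    · intro t ht
      have hm := hfmem t ht
      rw [Finset.mem_sdiff] at hm
      simp only [Finset.mem_coe, hF, Finset.mem_filter, Finset.mem_Icc] at ht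
      exact hQD t ht.1.1 ht.1.2 hm.1
    · have key : ∀ s t, s ∈ F → t ∈ F → s < t → f s ≠ f t := by
        intro s t hs ht hlt heq
        have hmemS := hfmem s hs
        have hmemT := hfmem t ht
        rw [Finset.mem_sdiff] at hmemS hmemT
        rw [hF, Finset.mem_filter, Finset.mem_Icc] at hs ht
        have : f s ∈ C t := persist hC ha (le_trans ht.1.2 hb) hD
          (fun u hu1 hu2 => hQD u hu1 (by omega)) hs.1.1 (by omega) hmemS.1
          t hlt (by omega)
        rw [heq] at this
        exact hmemT.2 this
      intro s hs t ht heq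
      simp only [Finset.mem_coe] at hs ht
      by_contra hne
      rcases Nat.lt_or_ge s t with hlt | hge
      · exact key s t hs ht hlt heq
      · exact key t s ht hs (by omega) heq.symm

lemma exists_schedule [DecidableEq Ω] [Fintype Ω] (k T : ℕ) (hΩ : k ≤ Fintype.card Ω)
    (Q : ℕ → Finset Ω) (hQk : ∀ t, 1 ≤ t → t ≤ T → (Q t).card ≤ k) :
    ∃ C : ℕ → Finset Ω, IsSchedule k T Q C := by
  classical
  have hΩ' : k ≤ (Finset.univ : Finset Ω).card := by simpa using hΩ
  obtain ⟨D0, -, hD0⟩ := Finset.exists_subset_card_eq hΩ'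
  set step : ℕ → Finset Ω → Finset Ω := fun t Cur =>
    if Q t ⊆ Cur then Cur
    else if h : (Q t).card ≤ k then
      (Finset.exists_subsuperset_card_eq (Finset.subset_univ (Q t)) h hΩ').choose
    else Cur with hstep
  have hstep_card : ∀ t Cur, Cur.card = k → (step t Cur).card = k := by
    intro t Cur hc
    rw [hstep]
    dsimp only
    split_ifs with h1 h2
    · exact hc
    · exact (Finset.exists_subsuperset_card_eq (Finset.subset_univ (Q t)) h2 hΩ').choose_spec.2.2
    · exact hc
  set g : ℕ → Finset Ω := fun n => Nat.rec D0 (fun n ih => step (n + 1) ih) n with hg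
  have hgcard : ∀ n, (g n).card = k := by
    intro n
    induction n with
    | zero => exact hD0
    | succ m ih => exact hstep_card (m + 1) (g m) ih
  refine ⟨fun t => g (t - 1), ?_, ?_⟩
  · intro t h1 _; exact hgcard (t - 1)
  · intro t h1 hT
    have hgt : g t = step t (g (t - 1)) := by
      obtain ⟨m, rfl⟩ : ∃ m, t = m + 1 := ⟨t - 1, by omega⟩
      simp [hg]
    constructor
    · intro hhit
      simp only [Nat.add_sub_cancel]
      rw [hgt, hstep]
      simp only [hhit, if_true]
    · intro hmiss
      simp only [Nat.add_sub_cancel]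
      rw [hgt, hstep]
      dsimp only
      rw [if_neg hmiss, dif_pos (hQk t h1 hT)]
      exact (Finset.exists_subsuperset_card_eq (Finset.subset_univ (Q t))
        (hQk t h1 hT) hΩ').choose_spec.1

/-- LRU is `k`-competitive for the file-bundle caching problem. -/
theorem stmt1 [DecidableEq Ω] [Fintype Ω] (l k T : ℕ) (hl : l ≤ k)
    (hΩ : k ≤ Fintype.card Ω)
    (Q C : ℕ → Finset Ω)
    (hQ : ∀ t, 1 ≤ t → t ≤ T → (Q t).card = l)
    (hC : IsLRUSchedule k T Q C) :
    cost T Q C ≤ k * OPT k T Q + k := by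
  classical
  have hQk : ∀ t, 1 ≤ t → t ≤ T → (Q t).card ≤ k := fun t h1 h2 => (hQ t h1 h2) ▸ hl
  obtain ⟨Cs, hCs⟩ := exists_schedule k T hΩ Q hQk
  have hne : {n : ℕ | ∃ C' : ℕ → Finset Ω, IsSchedule k T Q C' ∧ cost T Q C' = n}.Nonempty :=
    ⟨cost T Q Cs, Cs, hCs, rfl⟩
  obtain ⟨C', hC', hcost⟩ := Nat.sInf_mem hne
  have hOPT : cost T Q C' = OPT k T Q := hcost
  set σ : ℕ → ℕ :=
    fun t => ((Finset.Icc 1 t).filter fun r => ¬ Q r ⊆ C' r).sup id with hσ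
  set Mset := (Finset.Icc 1 T).filter fun r => ¬ Q r ⊆ C' r with hM
  set Lset := (Finset.Icc 1 T).filter fun t => ¬ Q t ⊆ C t with hL
  -- basic facts about σ
  have hσ_cases : ∀ t, σ t = 0 ∨
      (σ t ∈ (Finset.Icc 1 t).filter fun r => ¬ Q r ⊆ C' r) := by
    intro t
    set G := (Finset.Icc 1 t).filter fun r => ¬ Q r ⊆ C' r with hG
    rcases G.eq_empty_or_nonempty with hGe | hGne
    · left; simp [hσ, ← hG, hGe]
    · right
      obtain ⟨b, hb, heq⟩ := Finset.exists_mem_eq_sup G hGne id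
      have : σ t = b := heq
      rw [this]; exact hb
  have hσ_ge : ∀ t u, 1 ≤ u → u ≤ t → ¬ Q u ⊆ C' u → u ≤ σ t := by
    intro t u h1 h2 h3
    exact Finset.le_sup (f := id) (by simp [Finset.mem_Icc, h1, h2, h3])
  -- the key claim: all queries in the segment of r lie in C' (r+1)
  have hQsub : ∀ r t, 1 ≤ t → t ≤ T → σ t = r →
      ∀ u, max 1 r ≤ u → u ≤ t → Q u ⊆ C' (r + 1) := by
    intro r t ht1 htT hσt
    have hhit : ∀ u, r < u → u ≤ t → Q u ⊆ C' u := by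
      intro u hu1 hu2
      by_contra hmisss
      have := hσ_ge t u (by omega) hu2 hmisss
      omega
    have hconst : ∀ u, r + 1 ≤ u → u ≤ t → C' u = C' (r + 1) := by
      intro u
      induction u with
      | zero => omega
      | succ m ih =>
        intro hu1 hu2
        rcases Nat.lt_or_ge (r + 1) (m + 1) with h | h
        · have hm := ih (by omega) (by omega)
          rw [← hm]
          exact (hC'.2 m (by omega) (by omega)).1 (hhit m (by omega) (by omega))
        · have : m + 1 = r + 1 := by omega
          rw [this]
    intro u hu1 hu2
    rcases Nat.lt_or_ge r u with h | h
    · rw [← hconst u (by omega) hu2]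
      exact hhit u h hu2
    · -- u = r, r ≥ 1
      have hur : u = r := by omega
      have h1r : 1 ≤ r := by omega
      subst hur
      have hsch := hC'.2 u (by omega) (by omega)
      by_cases hh : Q u ⊆ C' u
      · rw [hsch.1 hh]; exact hh
      · exact hsch.2 hh
  -- σ maps Lset into insert 0 Mset
  have hmaps : ∀ t ∈ Lset, σ t ∈ insert 0 Mset := by
    intro t ht
    rw [hL, Finset.mem_filter, Finset.mem_Icc] at ht
    rcases hσ_cases t with h0 | hm
    · rw [h0]; exact Finset.mem_insert_self 0 Mset
    · rw [Finset.mem_filter, Finset.mem_Icc] at hm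
      apply Finset.mem_insert_of_mem
      rw [hM, Finset.mem_filter, Finset.mem_Icc]
      exact ⟨⟨hm.1.1, by omega⟩, hm.2⟩
  -- fiber bound
  have hfiber : ∀ r ∈ insert 0 Mset,
      (Lset.filter fun t => σ t = r).card ≤ k := by
    intro r _
    set F := Lset.filter fun t => σ t = r with hFd
    rcases F.eq_empty_or_nonempty with hFe | hFne
    · rw [hFe]; simp
    · set b := F.max' hFne with hbd
      have hbF : b ∈ F := F.max'_mem hFne
      have hbL : b ∈ Lset := (Finset.mem_filter.mp hbF).1
      have hσb : σ b = r := (Finset.mem_filter.mp hbF).2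
      rw [hL, Finset.mem_filter, Finset.mem_Icc] at hbL
      have hrb : r ≤ b := by
        rcases hσ_cases b with h0 | hm
        · omega
        · rw [hσb] at hm
          rw [Finset.mem_filter, Finset.mem_Icc] at hm
          exact hm.1.2
      -- each fiber element t satisfies max 1 r ≤ t ≤ b
      have hFsub : F ⊆ (Finset.Icc (max 1 r) b).filter fun t => ¬ Q t ⊆ C t := by
        intro t ht
        have htL : t ∈ Lset := (Finset.mem_filter.mp ht).1
        have hσt : σ t = r := (Finset.mem_filter.mp ht).2
        rw [hL, Finset.mem_filter, Finset.mem_Icc] at htL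
        have hrt : r ≤ t := by
          rcases hσ_cases t with h0 | hm
          · omega
          · rw [hσt] at hm
            rw [Finset.mem_filter, Finset.mem_Icc] at hm
            exact hm.1.2
        rw [Finset.mem_filter, Finset.mem_Icc]
        refine ⟨⟨?_, F.le_max' t ht⟩, htL.2⟩
        omega
      calc F.card ≤ _ := Finset.card_le_card hFsub
        _ ≤ k := segment_misses hC (le_max_left 1 r) hbL.1.2
            (hC'.1 (r + 1) (by omega) (by omega))
            (hQsub r b hbL.1.1 hbL.1.2 hσb)
  -- counting
  have hcount : Lset.card ≤ (insert 0 Mset).card * k := by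
    rw [Finset.card_eq_sum_card_fiberwise hmaps]
    calc (∑ r ∈ insert 0 Mset, (Lset.filter fun t => σ t = r).card)
        ≤ ∑ _r ∈ insert 0 Mset, k := Finset.sum_le_sum hfiber
      _ = (insert 0 Mset).card * k := by rw [Finset.sum_const, smul_eq_mul]
  have hins : (insert 0 Mset).card ≤ Mset.card + 1 := Finset.card_insert_le 0 Mset
  have hMOPT : Mset.card = OPT k T Q := hOPT
  have : Lset.card ≤ (Mset.card + 1) * k :=
    le_trans hcount (Nat.mul_le_mul_right k hins)
  have hfin : cost T Q C = Lset.card := rfl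
  rw [hfin, ← hMOPT]
  calc Lset.card ≤ (Mset.card + 1) * k := this
    _ = k * Mset.card + k := by ring
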